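/- Let 𝒳 ⊆ ℝ^p be a set whose complement is r-convex for some r > 0, i.e., for every x in the frontier ∂𝒳 there exists x̃ such that x ∈ closedBall(x̃, r) ⊆ 𝒳. Let r⃗ = (r, 0, …, 0) ∈ ℝ^p and let λ denote Lebesgue measure on ℝ^p. Then for every ε ≥ 0 and every x ∈ ∂𝒳, λ(𝒳 ∩ closedBall(x, ε)) ≥ λ(closedBall(0, ε) ∩ closedBall(r⃗, r)). -/

import Mathlib

open MeasureTheory Metric

/-- **Volume lower bound from r-convexity of the complement** (Lemma 8).
If the complement of `𝒳` is `r`-convex, then for any `ε ≥ 0` and boundary point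
`x ∈ ∂𝒳`, the volume of `𝒳 ∩ closedBall x ε` is at least the volume of the
intersection of the two balls `closedBall 0 ε` and `closedBall r⃗ r`. -/
theorem volume_inter_ball_ge_of_rconvex {p : ℕ} (hp : 0 < p)
    (𝒳 : Set (EuclideanSpace ℝ (Fin p)))
    (r : ℝ) (hr : 0 < r)
    (hrconv : ∀ x' ∈ frontier 𝒳, ∃ xt,
      x' ∈ Metric.closedBall xt r ∧ Metric.closedBall xt r ⊆ 𝒳)
    (rvec : EuclideanSpace ℝ (Fin p)) (hrvec : rvec = EuclideanSpace.single (⟨0, hp⟩ : Fin p) r)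
    (ε : ℝ) (hε : 0 ≤ ε)
    (x : EuclideanSpace ℝ (Fin p)) (hx : x ∈ frontier 𝒳) :
    volume (Metric.closedBall (0 : EuclideanSpace ℝ (Fin p)) ε ∩ Metric.closedBall rvec r) ≤
      volume (𝒳 ∩ Metric.closedBall x ε) := by
  obtain ⟨xt, hxball, hsub⟩ := hrconv x hx
  -- the boundary point is at distance exactly r from xt
  have hd : dist x xt = r := by
    refine le_antisymm (mem_closedBall.mp hxball) ?_
    by_contra h
    push_neg at h
    have hxint : x ∈ interior 𝒳 :=
      interior_mono hsub (ball_subset_interior_closedBall (mem_ball.mpr h))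
    exact hx.2 hxint
  set v : EuclideanSpace ℝ (Fin p) := xt - x with hv
  have hnv : ‖v‖ = r := by
    rw [hv, ← dist_eq_norm']; exact hd
  have hnrvec : ‖rvec‖ = r := by
    rw [hrvec, EuclideanSpace.norm_single, Real.norm_eq_abs, abs_of_pos hr]
  -- the rotation mapping rvec to v
  set O : EuclideanSpace ℝ (Fin p) ≃ₗᵢ[ℝ] EuclideanSpace ℝ (Fin p) :=
    Submodule.reflection (ℝ ∙ (rvec - v))ᗮ with hO
  have hOrvec : O rvec = v := Submodule.reflection_sub (hnrvec.trans hnv.symm)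
  -- the measure preserving map
  set f : EuclideanSpace ℝ (Fin p) → EuclideanSpace ℝ (Fin p) := fun y => x + O y with hf
  have hfmp : MeasurePreserving f volume volume :=
    (measurePreserving_add_left volume x).comp O.measurePreserving
  have hpre : Metric.closedBall (0 : EuclideanSpace ℝ (Fin p)) ε ∩ Metric.closedBall rvec r =
      f ⁻¹' (Metric.closedBall x ε ∩ Metric.closedBall xt r) := by
    ext y
    simp only [Set.mem_inter_iff, Set.mem_preimage, mem_closedBall, hf]
    constructor
    · rintro ⟨h1, h2⟩
      constructor
      · rw [dist_eq_norm, add_sub_cancel_left, O.norm_map]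
        rwa [dist_zero_right] at h1
      · have : x + O y - xt = O y - v := by rw [hv]; abel
        rw [dist_eq_norm, this, ← hOrvec, ← O.map_sub, O.norm_map, ← dist_eq_norm]
        exact h2
    · rintro ⟨h1, h2⟩
      constructor
      · rw [dist_zero_right, ← O.norm_map, ← add_sub_cancel_left x (O y), ← dist_eq_norm]
        exact h1
      · have : x + O y - xt = O y - v := by rw [hv]; abel
        rw [dist_eq_norm, this, ← hOrvec, ← O.map_sub, O.norm_map, ← dist_eq_norm] at h2
        exact h2
  have hmeas : MeasurableSet (Metric.closedBall x ε ∩ Metric.closedBall xt r) :=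
    measurableSet_closedBall.inter measurableSet_closedBall
  rw [hpre, hfmp.measure_preimage hmeas.nullMeasurableSet]
  refine measure_mono fun y ⟨h1, h2⟩ => ⟨hsub h2, h1⟩
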